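/- Let k be a field, n ≥ 2, and a_1,...,a_n positive integers with |a_s - a_t| ≤ 1 for all s,t. Let A = k[x_1,...,x_n]/(x_1^{a_1},...,x_n^{a_n}) and σ = Σa_i − n its socle degree. Then the Hilbert function i ↦ dim_k A_i is strictly increasing for 0 ≤ i ≤ σ/2. -/

import Mathlib

open MvPolynomial

/-- The Hilbert function of the monomial complete intersection
`A = k[x₁,…,xₙ]/(x₁^{a₁},…,xₙ^{aₙ})`: the `k`-dimension of the image of the space of
homogeneous polynomials of degree `i` in the quotient. -/
noncomputable def hilbertMonomialCI (k : Type*) [Field k] (n : ℕ) (a : Fin n → ℕ)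
    (i : ℕ) : ℕ :=
  Module.finrank k
    ((MvPolynomial.homogeneousSubmodule (Fin n) k i).map
      (Ideal.Quotient.mkₐ k
        (Ideal.span (Set.range fun j : Fin n =>
          (X j : MvPolynomial (Fin n) k) ^ a j))).toLinearMap)

noncomputable def gs (x : ℕ) : Polynomial ℕ := ∑ c ∈ Finset.range x, Polynomial.X ^ c

def cnt {n : ℕ} (a : Fin n → ℕ) (i : ℕ) : ℕ :=
  ((Fintype.piFinset fun j => Finset.range (a j)).filter fun b => ∑ j, b j = i).card


noncomputable def PP {n : ℕ} (a : Fin n → ℕ) : Polynomial ℕ := ∏ j, gs (a j)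

def Sig {n : ℕ} (a : Fin n → ℕ) : ℕ := ∑ j, (a j - 1)

lemma gs_coeff (x i : ℕ) : (gs x).coeff i = if i < x then 1 else 0 := by
  simp [gs, Polynomial.finset_sum_coeff, Polynomial.coeff_X_pow]

lemma cnt_eq_coeff {n : ℕ} (a : Fin n → ℕ) (i : ℕ) : cnt a i = (PP a).coeff i := by
  have h : PP a = ∑ b ∈ Fintype.piFinset fun j => Finset.range (a j),
      Polynomial.X ^ (∑ j, b j) := by
    rw [PP]
    simp only [gs]
    rw [Finset.prod_univ_sum]
    exact Finset.sum_congr rfl fun b _ => Finset.prod_pow_eq_pow_sum _ _ _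
  rw [h, cnt, Polynomial.finset_sum_coeff, Finset.card_filter]
  congr 1
  ext b
  simp [Polynomial.coeff_X_pow, eq_comm]

lemma natDegree_gs (x : ℕ) : (gs x).natDegree ≤ x - 1 := by
  refine (Polynomial.natDegree_sum_le _ _).trans ?_
  simp only [Finset.fold_max_le]
  constructor
  · omega
  · intro c hc
    simp only [Function.comp_apply]
    exact (Polynomial.natDegree_X_pow_le c).trans (by simp at hc; omega)

lemma PP_natDegree {n : ℕ} (a : Fin n → ℕ) : (PP a).natDegree ≤ Sig a :=
  (Polynomial.natDegree_prod_le _ _).trans (Finset.sum_le_sum fun j _ => natDegree_gs (a j))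

lemma PP_coeff_eq_zero {n : ℕ} (a : Fin n → ℕ) {i : ℕ} (h : Sig a < i) :
    (PP a).coeff i = 0 :=
  Polynomial.coeff_eq_zero_of_natDegree_lt (lt_of_le_of_lt (PP_natDegree a) h)

lemma PP_coeff_pos {n : ℕ} : ∀ (a : Fin n → ℕ), (∀ j, 1 ≤ a j) → ∀ i : ℕ, i ≤ Sig a →
    0 < (PP a).coeff i := by
  induction n with
  | zero =>
    intro a ha i h
    have : i = 0 := by simpa [Sig] using h
    simp [PP, this]
  | succ n IH =>
    intro a ha i h
    set a' : Fin n → ℕ := fun j => a j.castSucc with ha'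
    set x := a (Fin.last n) with hxdef
    have hx : 1 ≤ x := ha _
    have hsig : Sig a = Sig a' + (x - 1) := by
      simp [Sig, Fin.sum_univ_castSucc, ha', hxdef]
    have hPP : PP a = PP a' * gs x := by
      simp [PP, Fin.prod_univ_castSucc, ha', hxdef]
    set c := i - min i (Sig a') with hc
    have hc1 : c < x := by omega
    have hc2 : i - c ≤ Sig a' := by omega
    have hc3 : c ≤ i := by omega
    have hmem : ((i - c), c) ∈ Finset.HasAntidiagonal.antidiagonal i := by
      simp [Finset.HasAntidiagonal.mem_antidiagonal]; omega
    have hle : (PP a').coeff (i - c) * (gs x).coeff c ≤ (PP a).coeff i := by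
      rw [hPP, Polynomial.coeff_mul]
      exact Finset.single_le_sum (f := fun p => (PP a').coeff p.1 * (gs x).coeff p.2)
        (fun p _ => Nat.zero_le _) hmem
    have h1 : 0 < (PP a').coeff (i - c) := IH a' (fun j => ha _) _ hc2
    have h2 : (gs x).coeff c = 1 := by rw [gs_coeff]; simp [hc1]
    calc 0 < (PP a').coeff (i - c) * (gs x).coeff c := by rw [h2]; simpa using h1
      _ ≤ _ := hle

lemma cnt_sym {n : ℕ} (a : Fin n → ℕ) (ha : ∀ j, 1 ≤ a j) {i : ℕ} (h : i ≤ Sig a) :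
    cnt a i = cnt a (Sig a - i) := by
  classical
  have hSig : Sig a = ∑ j, (a j - 1) := rfl
  refine Finset.card_nbij' (fun b => fun j => a j - 1 - b j)
    (fun b => fun j => a j - 1 - b j) ?_ ?_ ?_ ?_
  · intro b hb
    simp only [Finset.mem_coe, Finset.mem_filter, Fintype.mem_piFinset, Finset.mem_range] at hb ⊢
    obtain ⟨hb1, hb2⟩ := hb
    refine ⟨fun j => by have := ha j; have := hb1 j; omega, ?_⟩
    rw [Finset.sum_tsub_distrib _ (fun j _ => by have := hb1 j; omega), hb2, hSig]
  · intro b hb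
    simp only [Finset.mem_coe, Finset.mem_filter, Fintype.mem_piFinset, Finset.mem_range] at hb ⊢
    obtain ⟨hb1, hb2⟩ := hb
    refine ⟨fun j => by have := ha j; have := hb1 j; omega, ?_⟩
    rw [Finset.sum_tsub_distrib _ (fun j _ => by have := hb1 j; omega), hb2]
    omega
  · intro b hb
    simp only [Finset.mem_coe, Finset.mem_filter, Fintype.mem_piFinset, Finset.mem_range] at hb
    funext j
    have := hb.1 j; have := ha j; simp; omega
  · intro b hb
    simp only [Finset.mem_coe, Finset.mem_filter, Fintype.mem_piFinset, Finset.mem_range] at hb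
    funext j
    have := hb.1 j; have := ha j; simp; omega

lemma gs_succ_id {x : ℕ} (hx : 1 ≤ x) :
    1 + Polynomial.X * gs x = gs x + Polynomial.X ^ x := by
  have h1 : Polynomial.X * gs x = ∑ c ∈ Finset.range x, (Polynomial.X:Polynomial ℕ) ^ (c+1) := by
    rw [gs, Finset.mul_sum]
    exact Finset.sum_congr rfl fun c _ => by ring
  have h2 : ∑ c ∈ Finset.range (x+1), (Polynomial.X:Polynomial ℕ) ^ c
      = 1 + ∑ c ∈ Finset.range x, (Polynomial.X:Polynomial ℕ) ^ (c+1) := by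
    rw [Finset.sum_range_succ']; ring
  have h3 : ∑ c ∈ Finset.range (x+1), (Polynomial.X:Polynomial ℕ) ^ c
      = gs x + Polynomial.X ^ x := by
    rw [Finset.sum_range_succ]; rfl
  rw [h1, ← h2, h3]

lemma rec_id {m : ℕ} (a : Fin (m+1) → ℕ) (hx : 1 ≤ a (Fin.last m)) {i : ℕ} (hi : 1 ≤ i) :
    (PP a).coeff (i-1) + (PP (fun j => a j.castSucc)).coeff i
      = (PP a).coeff i +
        (if a (Fin.last m) ≤ i then (PP (fun j => a j.castSucc)).coeff (i - a (Fin.last m))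
         else 0) := by
  set x := a (Fin.last m)
  set P' := PP (fun j : Fin m => a j.castSucc) with hP'
  have hPP : PP a = P' * gs x := by simp [PP, Fin.prod_univ_castSucc, hP', x]
  have key : P' * 1 + P' * (Polynomial.X * gs x) = P' * gs x + P' * Polynomial.X ^ x := by
    rw [← mul_add, ← mul_add, gs_succ_id hx]
  have key2 := congrArg (fun p => Polynomial.coeff p i) key
  simp only [mul_one] at key2
  have e1 : (P' * (Polynomial.X * gs x)).coeff i = (P' * gs x).coeff (i-1) := by
    have : P' * (Polynomial.X * gs x) = (P' * gs x) * Polynomial.X := by ring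
    rw [this]
    obtain ⟨i', rfl⟩ : ∃ i', i = i' + 1 := ⟨i - 1, by omega⟩
    rw [Polynomial.coeff_mul_X]
    simp
  have e2 : (P' * Polynomial.X ^ x).coeff i
      = if x ≤ i then P'.coeff (i - x) else 0 := Polynomial.coeff_mul_X_pow' P' x i
  simp only [Polynomial.coeff_add] at key2
  rw [e1, e2] at key2
  rw [hPP]
  omega

lemma chain (f : ℕ → ℕ) (σ : ℕ) (H : ∀ i, 1 ≤ i → 2*i ≤ σ → f (i-1) < f i) :
    ∀ u v, u < v → 2*v ≤ σ → f u < f v := by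
  intro u v huv
  induction v, huv using Nat.le_induction with
  | base => intro h; simpa using H (u+1) (by omega) h
  | succ v hv ih =>
    intro h
    have h2 := H (v+1) (by omega) h
    simp only [Nat.add_sub_cancel] at h2
    exact (ih (by omega)).trans h2

theorem cnt_mono : ∀ n : ℕ, ∀ a : Fin n → ℕ, (∀ j, 1 ≤ a j) → (∀ s t, a s ≤ a t + 1) →
    2 ≤ n → ∀ i, 1 ≤ i → 2 * i ≤ Sig a → cnt a (i-1) < cnt a i := by
  intro n
  induction n using Nat.strong_induction_on with
  | _ n ih =>
    intro a ha hd hn i hi hσ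
    obtain ⟨m, rfl⟩ : ∃ m, n = m + 1 := ⟨n - 1, by omega⟩
    have hm : 1 ≤ m := by omega
    set a' : Fin m → ℕ := fun j => a j.castSucc with ha'def
    set x := a (Fin.last m) with hxdef
    have hx : 1 ≤ x := ha _
    have ha' : ∀ j, 1 ≤ a' j := fun j => ha _
    have hd' : ∀ s t : Fin m, a' s ≤ a' t + 1 := fun s t => hd _ _
    have hsig : Sig a = Sig a' + (x - 1) := by
      simp [Sig, Fin.sum_univ_castSucc, ha'def, hxdef]
    -- the key inequality
    have key : (if x ≤ i then (PP a').coeff (i - x) else 0) < (PP a').coeff i := by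
      by_cases hxi : x ≤ i
      · rw [if_pos hxi]
        rcases Nat.lt_or_ge m 2 with hm2 | hm2
        · -- m = 1 : contradiction
          exfalso
          obtain rfl : m = 1 := by omega
          have h1 : a' 0 ≤ x + 1 := hd _ _
          have h2 : Sig a' = a' 0 - 1 := by simp [Sig]
          have := ha' 0
          omega
        · -- m ≥ 2 : use induction hypothesis, chained
          have hSIC := chain (fun j => (PP a').coeff j) (Sig a') (by
            intro j hj1 hj2
            have := ih m (by omega) a' ha' hd' hm2 j hj1 hj2
            rwa [cnt_eq_coeff, cnt_eq_coeff] at this)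
          have hile : i ≤ Sig a' - 1 := by omega
          rcases le_or_gt (2*i) (Sig a') with hc | hc
          · exact hSIC (i - x) i (by omega) hc
          · have hsym : (PP a').coeff i = (PP a').coeff (Sig a' - i) := by
              rw [← cnt_eq_coeff, ← cnt_eq_coeff, ← cnt_sym a' ha' (by omega)]
            rw [hsym]
            exact hSIC (i - x) (Sig a' - i) (by omega) (by omega)
      · rw [if_neg hxi]
        -- need 0 < (PP a').coeff i, i.e. i ≤ Sig a'
        have hbd : x - 2 ≤ Sig a' := by
          have h1 : x ≤ a' ⟨0, hm⟩ + 1 := hd _ _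
          have h2 : a' ⟨0, hm⟩ - 1 ≤ Sig a' :=
            Finset.single_le_sum (f := fun j => a' j - 1) (fun j _ => Nat.zero_le _)
              (Finset.mem_univ _)
          omega
        exact PP_coeff_pos a' ha' i (by omega)
    have hrec := rec_id a (by omega) hi
    rw [← hxdef, ← ha'def] at hrec
    rw [cnt_eq_coeff, cnt_eq_coeff]
    omega

lemma hilbert_eq_cnt (k : Type*) [Field k] (n : ℕ) (a : Fin n → ℕ) (i : ℕ) :
    hilbertMonomialCI k n a i = cnt a i := by
  classical
  unfold hilbertMonomialCI cnt
  set I := Ideal.span (Set.range fun j : Fin n => (X j : MvPolynomial (Fin n) k) ^ a j)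
    with hIdef
  set π := Ideal.Quotient.mkₐ k I with hπdef
  have hI : ∀ p : MvPolynomial (Fin n) k, p ∈ I ↔ ∀ d ∈ p.support, ∃ j, a j ≤ d j := by
    intro p
    have hfun : (fun j : Fin n => (X j : MvPolynomial (Fin n) k) ^ a j)
        = ((fun s => MvPolynomial.monomial s (1:k)) ∘ fun j => Finsupp.single j (a j)) :=
      funext fun j => by simp [MvPolynomial.X_pow_eq_monomial]
    have hIm : I = Ideal.span ((fun s => MvPolynomial.monomial s (1:k)) ''
        (Set.range fun j : Fin n => Finsupp.single j (a j))) := by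
      rw [hIdef, hfun, Set.range_comp]
    rw [hIm, mem_ideal_span_monomial_image]
    constructor
    · intro h d hd
      obtain ⟨si, ⟨j, rfl⟩, hle⟩ := h d hd
      exact ⟨j, Finsupp.single_le_iff.mp hle⟩
    · intro h d hd
      obtain ⟨j, hj⟩ := h d hd
      exact ⟨Finsupp.single j (a j), ⟨j, rfl⟩, Finsupp.single_le_iff.mpr hj⟩
  set G : Finset (Fin n →₀ ℕ) :=
    ((Fintype.piFinset fun j => Finset.range (a j)).filter fun b => ∑ j, b j = i).map
      (Finsupp.equivFunOnFinite.symm.toEmbedding) with hGdef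
  have hmemG : ∀ b : Fin n →₀ ℕ, b ∈ G ↔ (∀ j, b j < a j) ∧ ∑ j, b j = i := by
    intro b
    rw [hGdef, Finset.mem_map_equiv]
    simp [Fintype.mem_piFinset]
  have hdeg : ∀ d : Fin n →₀ ℕ, d.degree = ∑ j, d j := by
    intro d
    rw [Finsupp.degree]
    exact Finset.sum_subset (Finset.subset_univ _)
      (fun j _ hj => Finsupp.notMem_support_iff.mp hj)
  set v : {b // b ∈ G} → (MvPolynomial (Fin n) k ⧸ I) :=
    fun b => π (monomial (b : Fin n →₀ ℕ) (1:k)) with hvdef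
  have hπ0 : ∀ p : MvPolynomial (Fin n) k, π p = 0 ↔ p ∈ I := fun p => by
    rw [hπdef, Ideal.Quotient.mkₐ_eq_mk, Ideal.Quotient.eq_zero_iff_mem]
  have hspan : (homogeneousSubmodule (Fin n) k i).map π.toLinearMap
      = Submodule.span k (Set.range v) := by
    apply le_antisymm
    · rintro x ⟨p, hp, rfl⟩
      have hp' : p.IsHomogeneous i := hp
      have hps : π.toLinearMap p = ∑ d ∈ p.support, π (MvPolynomial.monomial d (coeff d p)) := by
        conv_lhs => rw [show p = ∑ d ∈ p.support, MvPolynomial.monomial d (coeff d p) from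
          p.as_sum]
        rw [map_sum]
        rfl
      rw [hps]
      apply Submodule.sum_mem
      intro d hd
      by_cases hgood : ∀ j, d j < a j
      · have hw := hp' (MvPolynomial.mem_support_iff.mp hd)
        have hdi : ∑ j, d j = i := by
          rw [← hdeg d]
          rw [Finsupp.degree_eq_weight_one]
          exact hw
        have hdG : d ∈ G := (hmemG d).mpr ⟨hgood, hdi⟩
        have he : monomial d (coeff d p) = (coeff d p) • monomial d (1:k) := by
          rw [smul_monomial, smul_eq_mul, mul_one]
        rw [he, map_smul]
        exact Submodule.smul_mem _ _ (Submodule.subset_span ⟨⟨d, hdG⟩, rfl⟩)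
      · push_neg at hgood
        obtain ⟨j, hj⟩ := hgood
        have hmem : monomial d (coeff d p) ∈ I := (hI _).mpr (by
          intro d' hd'
          have hd'd : d' = d := by
            have := MvPolynomial.support_monomial_subset hd'
            simpa using this
          subst hd'd
          exact ⟨j, hj⟩)
        rw [(hπ0 _).mpr hmem]
        exact Submodule.zero_mem _
    · rw [Submodule.span_le]
      rintro x ⟨b, rfl⟩
      refine ⟨monomial (b : Fin n →₀ ℕ) 1, ?_, rfl⟩
      exact isHomogeneous_monomial _ (by rw [hdeg]; exact ((hmemG _).mp b.2).2)
  have hli : LinearIndependent k v := by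
    rw [linearIndependent_iff']
    intro s g hsum b₀ hb₀
    set q : MvPolynomial (Fin n) k := ∑ b ∈ s, monomial (b : Fin n →₀ ℕ) (g b) with hq
    have hπq : π q = 0 := by
      rw [hq, map_sum, ← hsum]
      apply Finset.sum_congr rfl
      intro b _
      rw [hvdef, ← map_smul, smul_monomial, smul_eq_mul, mul_one]
    have hcoeff : coeff (b₀ : Fin n →₀ ℕ) q = g b₀ := by
      rw [hq, MvPolynomial.coeff_sum]
      have hstep : ∀ b ∈ s, MvPolynomial.coeff (b₀ : Fin n →₀ ℕ)
          (MvPolynomial.monomial (b : Fin n →₀ ℕ) (g b)) = if b = b₀ then g b else 0 := by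
        intro b _
        rw [MvPolynomial.coeff_monomial]
        by_cases h : b = b₀
        · subst h; simp
        · have h2 : (b : Fin n →₀ ℕ) ≠ (b₀ : Fin n →₀ ℕ) := fun hc => h (Subtype.ext hc)
          simp [h, h2]
      rw [Finset.sum_congr rfl hstep, Finset.sum_ite_eq' s b₀ g, if_pos hb₀]
    by_contra hg
    have hbsup : (b₀ : Fin n →₀ ℕ) ∈ q.support :=
      MvPolynomial.mem_support_iff.mpr (hcoeff ▸ hg)
    obtain ⟨j, hj⟩ := (hI q).mp ((hπ0 q).mp hπq) _ hbsup
    exact absurd hj (by have := ((hmemG _).mp b₀.2).1 j; omega)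
  rw [hspan, finrank_span_eq_card hli, Fintype.card_coe, hGdef, Finset.card_map]

/-- Proposition 6.1(1): if all `a_i ≥ 1` differ pairwise by at most `1`, the Hilbert
function of `k[x₁,…,xₙ]/(x₁^{a₁},…,xₙ^{aₙ})` is strictly increasing for
`0 ≤ i ≤ σ/2`, where `σ = Σ aᵢ − n` is the socle degree. -/
theorem stmt6 {k : Type*} [Field k] (n : ℕ) (hn : 2 ≤ n) (a : Fin n → ℕ)
    (ha : ∀ i, 1 ≤ a i) (hdiff : ∀ s t : Fin n, a s ≤ a t + 1) :
    ∀ i : ℕ, 1 ≤ i → 2 * i ≤ (∑ j, a j) - n →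
      hilbertMonomialCI k n a (i - 1) < hilbertMonomialCI k n a i := by
  intro i hi hσ
  have hSig : Sig a = (∑ j, a j) - n := by
    rw [Sig, Finset.sum_tsub_distrib _ (fun j _ => ha j)]
    simp
  rw [hilbert_eq_cnt, hilbert_eq_cnt]
  exact cnt_mono n a ha hdiff hn i hi (by rw [hSig]; exact hσ)
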